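/- Let b, τ be real numbers with sin(b·τ) ≠ 0, let p > 0, let z ∈ ℂ, and let v : ℝ → ℝ satisfy v(t) − 2·Re(e^{ibt}·z) = O(t^{−p}) as t → ∞. Define w : ℝ → ℂ by w(t) := (v(t+τ)·e^{−ibt} − v(t)·e^{−ib(t+τ)}) / (2i·sin(bτ)). Then w(t) − z = O(t^{−p}) as t → ∞. -/

import Mathlib

open Filter Asymptotics Complex

private lemma phase_key (b τ t : ℝ) (z : ℂ) (hτ : Real.sin (b*τ) ≠ 0) :
    ((Complex.exp (I*(b*(t+τ)))*z + Complex.exp (-(I*(b*(t+τ))))*(starRingEnd ℂ) z) * Complex.exp (-(I*(b*t)))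
      - (Complex.exp (I*(b*t))*z + Complex.exp (-(I*(b*t)))*(starRingEnd ℂ) z) * Complex.exp (-(I*(b*(t+τ)))))
      / (2*I*(Real.sin (b*τ):ℂ)) = z := by
  have hτ' : (Real.sin (b*τ) : ℂ) ≠ 0 := Complex.ofReal_ne_zero.mpr hτ
  have hD : (2*I*(Real.sin (b*τ):ℂ)) ≠ 0 :=
    mul_ne_zero (mul_ne_zero two_ne_zero I_ne_zero) hτ'
  rw [div_eq_iff hD]
  rw [Complex.ofReal_sin, Complex.sin, Complex.ofReal_mul]
  have h1 : (b:ℂ)*(t+τ) = b*t + b*τ := by ring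
  rw [h1, mul_add I ((b:ℂ)*t) ((b:ℂ)*τ)]
  simp only [neg_mul, mul_comm ((b:ℂ)*(τ:ℂ)) I]
  simp only [Complex.exp_neg, Complex.exp_add]
  have hA := Complex.exp_ne_zero (I*((b:ℂ)*t))
  have hB := Complex.exp_ne_zero (I*((b:ℂ)*τ))
  generalize Complex.exp (I*((b:ℂ)*t)) = A at *
  generalize Complex.exp (I*((b:ℂ)*τ)) = B at *
  field_simp
  ring_nf
  rw [Complex.I_sq]
  ring

private lemma shift_rpow_isBigO (τ p : ℝ) :
    (fun t : ℝ => (t + τ) ^ (-p)) =O[atTop] fun t : ℝ => t ^ (-p) := by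
  apply Asymptotics.isBigO_of_div_tendsto_nhds (c := (1:ℝ))
  · filter_upwards [eventually_gt_atTop (0:ℝ)] with t ht h
    exact absurd h (Real.rpow_pos_of_pos ht (-p)).ne'
  · have h1 : Tendsto (fun t : ℝ => (t + τ) / t) atTop (nhds 1) := by
      have he : (fun t : ℝ => (t + τ) / t) =ᶠ[atTop] fun t => 1 + τ / t := by
        filter_upwards [eventually_ne_atTop (0:ℝ)] with t ht
        field_simp
      rw [tendsto_congr' he]
      have h0 : Tendsto (fun t : ℝ => τ / t) atTop (nhds 0) :=
        Tendsto.div_atTop tendsto_const_nhds tendsto_id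
      simpa using tendsto_const_nhds.add h0
    have h2 : Tendsto (fun t : ℝ => ((t + τ) / t) ^ (-p)) atTop (nhds 1) := by
      have := (Real.continuousAt_rpow_const 1 (-p) (Or.inl one_ne_zero)).tendsto.comp h1
      simpa [Function.comp_def] using this
    refine Tendsto.congr' ?_ h2
    filter_upwards [eventually_ge_atTop (max 1 (-τ))] with t ht
    have ht1 : (0:ℝ) < t := lt_of_lt_of_le one_pos (le_trans (le_max_left _ _) ht)
    have ht2 : (0:ℝ) ≤ t + τ := by
      have := le_trans (le_max_right (1:ℝ) (-τ)) ht
      linarith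
    simp only [Pi.div_apply]
    rw [Real.div_rpow ht2 ht1.le]

theorem twoPoint_phase_retrieval
    (b τ : ℝ) (hτ : Real.sin (b * τ) ≠ 0) (p : ℝ) (hp : 0 < p) (z : ℂ) (v : ℝ → ℝ)
    (hv : (fun t : ℝ => v t - 2 * (Complex.exp (Complex.I * (b * t)) * z).re)
        =O[atTop] fun t : ℝ => t ^ (-p))
    (w : ℝ → ℂ)
    (hw : ∀ t : ℝ, w t =
      ((v (t + τ) : ℂ) * Complex.exp (-(Complex.I * (b * t)))
        - (v t : ℂ) * Complex.exp (-(Complex.I * (b * (t + τ)))))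
        / (2 * Complex.I * (Real.sin (b * τ) : ℂ))) :
    (fun t : ℝ => w t - z) =O[atTop] fun t : ℝ => t ^ (-p) := by
  set E : ℝ → ℂ := fun t =>
    (v t : ℂ) - (Complex.exp (I*(b*t))*z + Complex.exp (-(I*(b*t)))*(starRingEnd ℂ) z) with hE_def
  have hE_eq : ∀ t, E t = ((v t - 2 * (Complex.exp (I * (b * t)) * z).re : ℝ) : ℂ) := by
    intro t
    have hc : Complex.exp (-(I*(b*t)))*(starRingEnd ℂ) z
        = (starRingEnd ℂ) (Complex.exp (I*(b*t))*z) := by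
      rw [map_mul, ← Complex.exp_conj]
      congr 1
      simp [Complex.ext_iff]
    have := Complex.add_conj (Complex.exp (I*(b*t))*z)
    simp only [hE_def, hc]
    rw [this]
    push_cast
    ring
  have hE : E =O[atTop] fun t : ℝ => t ^ (-p) := by
    refine IsBigO.trans (Asymptotics.isBigO_of_le atTop fun t => ?_) hv
    rw [hE_eq t, Complex.norm_real]
  have hEτ : (fun t => E (t + τ)) =O[atTop] fun t : ℝ => t ^ (-p) :=
    (hE.comp_tendsto (tendsto_atTop_add_const_right atTop τ tendsto_id)).trans
      (shift_rpow_isBigO τ p)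
  have hwz : ∀ t, w t - z =
      (E (t+τ) * Complex.exp (-(I*(b*t))) - E t * Complex.exp (-(I*(b*(t+τ)))))
        / (2*I*(Real.sin (b*τ):ℂ)) := by
    intro t
    rw [hw t]
    conv_lhs => rw [show z = _ from (phase_key b τ t z hτ).symm]
    rw [div_sub_div_same]
    congr 1
    simp only [hE_def]
    push_cast
    ring
  have h1 : (fun t => E (t+τ) * Complex.exp (-(I*(b*t)))) =O[atTop]
      fun t : ℝ => t ^ (-p) := by
    refine IsBigO.trans (Asymptotics.isBigO_of_le atTop fun t => ?_) hEτ
    rw [norm_mul]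
    simp [Complex.norm_exp]
  have h2 : (fun t => E t * Complex.exp (-(I*(b*(t+τ))))) =O[atTop]
      fun t : ℝ => t ^ (-p) := by
    refine IsBigO.trans (Asymptotics.isBigO_of_le atTop fun t => ?_) hE
    rw [norm_mul]
    simp [Complex.norm_exp]
  have := (h1.sub h2).const_mul_left ((2*I*(Real.sin (b*τ):ℂ))⁻¹)
  refine this.congr' ?_ EventuallyEq.rfl
  filter_upwards with t
  rw [hwz t, div_eq_mul_inv, mul_comm]
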